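/- Failure of Taylor truncation in the appendix example. Let k ≥ 2 be an even integer and let T(x) = ∑_{j=0}^{k−1} (−1)^j x^{2j+1} / (2j+1)! be the Taylor polynomial of sin of degree 2k − 1 at 0. Then the origin is asymptotically stable for the truncated planar system ẋ = x (y − x sin x), ẏ = −y² (y − x T(x)): the origin is Lyapunov stable and there exists a neighborhood U of (0,0) such that every solution with initial condition in U converges to (0,0) as t → ∞. (In contrast, the origin is not asymptotically stable for the untruncated system ẋ = x (y − x sin x), ẏ = −y² (y − x sin x).) -/

import Mathlib

open scoped BigOperators


open scoped BigOperators
open Real Filter Set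

namespace TruncHelp

noncomputable def P (u : ℝ) : ℝ := u * Real.sin u
noncomputable def S (m : ℕ) (u : ℝ) : ℝ :=
  ∑ j ∈ Finset.range m, (-1:ℝ)^j * u^(2*j+1) / (Nat.factorial (2*j+1))
noncomputable def C (m : ℕ) (u : ℝ) : ℝ :=
  ∑ j ∈ Finset.range m, (-1:ℝ)^j * u^(2*j) / (Nat.factorial (2*j))

lemma contS (m : ℕ) : Continuous (S m) := by
  unfold S
  exact continuous_finset_sum _ fun j _ => (continuous_const.mul (continuous_pow _)).div_const _

lemma hasDerivAt_S (m : ℕ) (u : ℝ) : HasDerivAt (S m) (C m u) u := by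
  have h : HasDerivAt (S m)
      (∑ j ∈ Finset.range m, (-1:ℝ)^j * ((2*j+1) * u^(2*j)) / (Nat.factorial (2*j+1))) u := by
    apply HasDerivAt.fun_sum
    intro j _
    have := ((hasDerivAt_pow (2*j+1) u).const_mul ((-1:ℝ)^j)).div_const
      ((Nat.factorial (2*j+1) : ℝ))
    simpa using this
  convert h using 1
  unfold C
  refine Finset.sum_congr rfl fun j _ => ?_
  have h1 : (Nat.factorial (2*j+1) : ℝ) = (2*j+1) * Nat.factorial (2*j) := by
    rw [Nat.factorial_succ]; push_cast; ring
  have h2 : (Nat.factorial (2*j) : ℝ) ≠ 0 := Nat.cast_ne_zero.2 (Nat.factorial_ne_zero _)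
  rw [h1]
  field_simp

lemma hasDerivAt_C (m : ℕ) (u : ℝ) : HasDerivAt (C (m+1)) (-(S m u)) u := by
  have hrw : ∀ v : ℝ, C (m+1) v = 1 + ∑ i ∈ Finset.range m,
      (-1:ℝ)^(i+1) * v^(2*(i+1)) / (Nat.factorial (2*(i+1))) := by
    intro v
    unfold C
    rw [Finset.sum_range_succ' (fun j => (-1:ℝ)^j * v^(2*j) / (Nat.factorial (2*j)))]
    simp [add_comm]
  have h : HasDerivAt (fun v => 1 + ∑ i ∈ Finset.range m,
      (-1:ℝ)^(i+1) * v^(2*(i+1)) / (Nat.factorial (2*(i+1))))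
      (∑ i ∈ Finset.range m,
        (-1:ℝ)^(i+1) * ((2*(i+1)) * u^(2*(i+1)-1)) / (Nat.factorial (2*(i+1)))) u := by
    apply (HasDerivAt.fun_sum ?_).const_add
    intro i _
    have := ((hasDerivAt_pow (2*(i+1)) u).const_mul ((-1:ℝ)^(i+1))).div_const
      ((Nat.factorial (2*(i+1)) : ℝ))
    simpa using this
  have h2 : HasDerivAt (C (m+1)) (∑ i ∈ Finset.range m,
      (-1:ℝ)^(i+1) * ((2*(i+1)) * u^(2*(i+1)-1)) / (Nat.factorial (2*(i+1)))) u := by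
    refine HasDerivAt.congr_of_eventuallyEq h ?_
    filter_upwards with v using (hrw v)
  convert h2 using 1
  unfold S
  rw [← Finset.sum_neg_distrib]
  refine Finset.sum_congr rfl fun i _ => ?_
  have e1 : 2*(i+1) = (2*i+1) + 1 := by ring
  have e2 : 2*(i+1) - 1 = 2*i+1 := by omega
  have h1 : (Nat.factorial (2*(i+1)) : ℝ) = (2*(i+1)) * Nat.factorial (2*i+1) := by
    rw [e1, Nat.factorial_succ]; push_cast; ring
  have h2' : (Nat.factorial (2*i+1) : ℝ) ≠ 0 := Nat.cast_ne_zero.2 (Nat.factorial_ne_zero _)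
  rw [h1, e2, pow_succ]
  field_simp
  ring

lemma S_zero (m : ℕ) : S m 0 = 0 := by
  unfold S
  apply Finset.sum_eq_zero
  intro j _
  simp [zero_pow (Nat.succ_ne_zero (2*j))]

lemma C_zero (m : ℕ) : C (m+1) 0 = 1 := by
  unfold C
  rw [Finset.sum_range_succ' (fun j => (-1:ℝ)^j * (0:ℝ)^(2*j) / (Nat.factorial (2*j)))]
  have : ∀ i ∈ Finset.range m, (-1:ℝ)^(i+1) * (0:ℝ)^(2*(i+1)) / (Nat.factorial (2*(i+1))) = 0 := by
    intro i _
    simp [zero_pow (by omega : 2*(i+1) ≠ 0)]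
  rw [Finset.sum_congr rfl this]
  simp

lemma taylorPos (m : ℕ) : ∀ u : ℝ, 0 < u → u ≤ 1 →
    0 < (-1:ℝ)^m * (Real.sin u - S m u) ∧ 0 < (-1:ℝ)^m * (Real.cos u - C m u) := by
  induction m with
  | zero =>
    intro u hu hu1
    constructor
    · simp only [pow_zero, one_mul, S, Finset.range_zero, Finset.sum_empty, sub_zero]
      exact Real.sin_pos_of_pos_of_lt_pi hu (lt_of_le_of_lt hu1 (by linarith [Real.pi_gt_three]))
    · simp only [pow_zero, one_mul, C, Finset.range_zero, Finset.sum_empty, sub_zero]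
      apply Real.cos_pos_of_mem_Ioo
      constructor <;> nlinarith [Real.pi_gt_three]
  | succ m ih =>
    intro u hu hu1
    -- cosine part first
    set F : ℝ → ℝ := fun v => (-1:ℝ)^(m+1) * (Real.cos v - C (m+1) v) with hF
    have hF' : ∀ v : ℝ, HasDerivAt F ((-1:ℝ)^m * (Real.sin v - S m v)) v := by
      intro v
      have h := ((Real.hasDerivAt_cos v).sub (hasDerivAt_C m v)).const_mul ((-1:ℝ)^(m+1))
      exact h.congr_deriv (by rw [pow_succ]; ring)
    have hFmono : StrictMonoOn F (Icc 0 1) := by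
      apply strictMonoOn_of_deriv_pos (convex_Icc 0 1)
      · exact Continuous.continuousOn (continuous_iff_continuousAt.2 fun v => (hF' v).continuousAt)
      · intro v hv
        rw [interior_Icc] at hv
        rw [(hF' v).deriv]
        exact (ih v hv.1 hv.2.le).1
    have hFpos : 0 < F u := by
      have h0 : F 0 = 0 := by simp [hF, C_zero]
      have := hFmono (left_mem_Icc.2 zero_le_one) ⟨hu.le, hu1⟩ hu
      rwa [h0] at this
    -- sine part
    set G : ℝ → ℝ := fun v => (-1:ℝ)^(m+1) * (Real.sin v - S (m+1) v) with hG
    have hG' : ∀ v : ℝ, HasDerivAt G (F v) v := by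
      intro v
      have h := ((Real.hasDerivAt_sin v).sub (hasDerivAt_S (m+1) v)).const_mul ((-1:ℝ)^(m+1))
      exact h
    have hGpos : 0 < G u := by
      have hGmono : StrictMonoOn G (Icc 0 1) := by
        apply strictMonoOn_of_deriv_pos (convex_Icc 0 1)
        · exact Continuous.continuousOn (continuous_iff_continuousAt.2 fun v => (hG' v).continuousAt)
        · intro v hv
          rw [interior_Icc] at hv
          rw [(hG' v).deriv]
          have h0 : F 0 = 0 := by simp [hF, C_zero]
          have := hFmono (left_mem_Icc.2 zero_le_one) ⟨hv.1.le, hv.2.le⟩ hv.1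
          rwa [h0] at this
      have h0 : G 0 = 0 := by simp [hG, S_zero]
      have := hGmono (left_mem_Icc.2 zero_le_one) ⟨hu.le, hu1⟩ hu
      rwa [h0] at this
    exact ⟨hGpos, hFpos⟩


noncomputable def Q (k : ℕ) (u : ℝ) : ℝ := u * S k u

lemma contP : Continuous P := continuous_id.mul Real.continuous_sin

lemma contQ (k : ℕ) : Continuous (Q k) := continuous_id.mul (contS k)

noncomputable def Pd (u : ℝ) : ℝ := Real.sin u + u * Real.cos u

lemma hasDerivAt_P (u : ℝ) : HasDerivAt P (Pd u) u := by
  have := (hasDerivAt_id' u).mul (Real.hasDerivAt_sin u)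
  show HasDerivAt (fun u => u * Real.sin u) (Real.sin u + u * Real.cos u) u
  exact this.congr_deriv (by ring)

section ineq
variable {k : ℕ} (hk : 2 ≤ k) (hke : Even k) {u : ℝ} (hu : 0 < u) (hu1 : u ≤ 1)
include hk hke hu hu1

lemma S_lt_sin : S k u < Real.sin u := by
  have h := (taylorPos k u hu hu1).1
  rw [hke.neg_one_pow, one_mul] at h
  linarith

lemma Q_lt_P : Q k u < P u := by
  have := S_lt_sin hk hke hu hu1
  unfold Q P
  nlinarith

lemma S_pos : 0 < S k u := by
  have h := (taylorPos (k+1) u hu hu1).1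
  rw [(Even.add_one hke).neg_one_pow] at h; rw [neg_one_mul, neg_sub] at h
  have hs : S (k+1) u = S k u + u^(2*k+1) / (Nat.factorial (2*k+1)) := by
    unfold S
    rw [Finset.sum_range_succ, hke.neg_one_pow, one_mul]
  have hsin : u - u^3/4 < Real.sin u := by have := Real.sin_gt_sub_cube hu; nlinarith [pow_pos hu 3]
  have hfac : (120 : ℝ) ≤ (Nat.factorial (2*k+1) : ℝ) := by
    have : Nat.factorial 5 ≤ Nat.factorial (2*k+1) := Nat.factorial_le (by omega)
    calc (120:ℝ) = (Nat.factorial 5 : ℝ) := by norm_num [Nat.factorial]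
    _ ≤ _ := by exact_mod_cast this
  have hup : u^(2*k+1) ≤ u := by
    calc u^(2*k+1) ≤ u^1 := pow_le_pow_of_le_one hu.le hu1 (by omega)
    _ = u := pow_one u
  have hu3 : u^3 ≤ u := by
    calc u^3 ≤ u^1 := pow_le_pow_of_le_one hu.le hu1 (by omega)
    _ = u := pow_one u
  have hquot : u^(2*k+1) / (Nat.factorial (2*k+1)) ≤ u / 120 := by
    apply div_le_div₀ (by positivity) hup (by norm_num) hfac
  nlinarith [h, hs]

lemma Q_pos : 0 < Q k u := mul_pos hu (S_pos hk hke hu hu1)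

end ineq

lemma P_nonneg {u : ℝ} (hu : 0 ≤ u) (hu1 : u ≤ 1) : 0 ≤ P u := by
  unfold P
  rcases eq_or_lt_of_le hu with h | h
  · simp [← h]
  · exact (mul_pos h (Real.sin_pos_of_pos_of_lt_pi h
      (lt_of_le_of_lt hu1 (by linarith [Real.pi_gt_three])))).le

lemma P_le_sq {u : ℝ} (hu : 0 ≤ u) : P u ≤ u^2 := by
  unfold P
  have := Real.sin_le hu
  nlinarith

lemma P_ge {u : ℝ} (hu : 0 < u) (hu1 : u ≤ 1) : (3/4) * u^2 ≤ P u := by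
  have hsin : u - u^3/4 < Real.sin u := by have := Real.sin_gt_sub_cube hu; nlinarith [pow_pos hu 3]
  have hu3 : u^3 ≤ u^2 * 1 := by nlinarith
  unfold P
  nlinarith

lemma P_pos {u : ℝ} (hu : 0 < u) (hu1 : u ≤ 1) : 0 < P u :=
  lt_of_lt_of_le (by positivity) (P_ge hu hu1)

end TruncHelp
open Real Filter Set Topology

namespace TruncHelp2

lemma eventually_left_of_deriv_neg {f : ℝ → ℝ} {d τ : ℝ}
    (hf : HasDerivAt f d τ) (hd : d < 0) : ∀ᶠ t in 𝓝[<] τ, f τ < f t := by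
  have hs : Tendsto (slope f τ) (𝓝[≠] τ) (𝓝 d) := hasDerivAt_iff_tendsto_slope.mp hf
  have hs' : Tendsto (slope f τ) (𝓝[<] τ) (𝓝 d) :=
    hs.mono_left (nhdsWithin_mono τ (fun t ht => ne_of_lt ht))
  have h1 : ∀ᶠ t in 𝓝[<] τ, slope f τ t < 0 := hs'.eventually_lt_const hd
  filter_upwards [h1, self_mem_nhdsWithin] with t ht hlt
  have h2 : t - τ < 0 := sub_neg.2 hlt
  have h3 : (t - τ)⁻¹ * (f t - f τ) < 0 := by
    simpa [slope] using ht
  have hinv : (t - τ)⁻¹ < 0 := inv_lt_zero.2 h2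
  rcases mul_neg_iff.mp h3 with ⟨hp, _⟩ | ⟨_, hq⟩
  · linarith
  · linarith

lemma eventually_right_of_deriv_neg {f : ℝ → ℝ} {d τ : ℝ}
    (hf : HasDerivAt f d τ) (hd : d < 0) : ∀ᶠ t in 𝓝[>] τ, f t < f τ := by
  have hs : Tendsto (slope f τ) (𝓝[≠] τ) (𝓝 d) := hasDerivAt_iff_tendsto_slope.mp hf
  have hs' : Tendsto (slope f τ) (𝓝[>] τ) (𝓝 d) :=
    hs.mono_left (nhdsWithin_mono τ (fun t ht => ne_of_gt ht))
  have h1 : ∀ᶠ t in 𝓝[>] τ, slope f τ t < 0 := hs'.eventually_lt_const hd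
  filter_upwards [h1, self_mem_nhdsWithin] with t ht hlt
  have h2 : (0:ℝ) < t - τ := sub_pos.2 hlt
  have h3 : (t - τ)⁻¹ * (f t - f τ) < 0 := by
    simpa [slope] using ht
  have hinv : (0:ℝ) < (t - τ)⁻¹ := inv_pos.2 h2
  rcases mul_neg_iff.mp h3 with ⟨_, hq⟩ | ⟨hp, _⟩
  · linarith
  · linarith

lemma cont_tilde {x : ℝ → ℝ} {T : ℝ} (h : ∀ t, T ≤ t → ContinuousAt x t) :
    Continuous (fun t => x (max t T)) := by
  rw [continuous_iff_continuousAt]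
  intro t
  have hmax : ContinuousAt (fun s : ℝ => max s T) t := (continuous_id.max continuous_const).continuousAt
  have := ContinuousAt.comp (g := x) (f := fun s : ℝ => max s T) (x := t)
    (h (max t T) (le_max_right t T)) hmax
  exact this

/-- Exponential form / sign preservation for `z' = z * g`. -/
lemma expSign {z g : ℝ → ℝ} (hz : ∀ t, 0 ≤ t → HasDerivAt z (z t * g t) t)
    (hg : ∀ t, 0 ≤ t → ContinuousAt g t) :
    ∀ t, 0 ≤ t → ∃ c : ℝ, 0 < c ∧ z t = z 0 * c := by
  intro t ht
  rcases eq_or_lt_of_le ht with rfl | htpos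
  · exact ⟨1, one_pos, (mul_one _).symm⟩
  set g' : ℝ → ℝ := fun s => g (max s 0) with hg'
  have hgc : Continuous g' := cont_tilde hg
  set G : ℝ → ℝ := fun s => ∫ u in (0:ℝ)..s, g' u with hG
  have hGd : ∀ s : ℝ, HasDerivAt G (g' s) s := by
    intro s
    exact intervalIntegral.integral_hasDerivAt_right
      (hgc.intervalIntegrable _ _)
      (hgc.stronglyMeasurableAtFilter _ _)
      hgc.continuousAt
  set w : ℝ → ℝ := fun s => z s * Real.exp (-G s) with hw
  have hwd : ∀ s ∈ Ico (0:ℝ) t, HasDerivWithinAt w 0 (Ici s) s := by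
    intro s hs
    have hzd := hz s hs.1
    have hd : HasDerivAt w (z s * g s * Real.exp (-G s) + z s * (Real.exp (-G s) * -(g' s))) s :=
      hzd.mul (((hGd s).neg).exp)
    have hgs : g' s = g s := by simp [hg', max_eq_left hs.1]
    have : HasDerivAt w 0 s := by
      convert hd using 1
      rw [hgs]; ring
    exact this.hasDerivWithinAt
  have hwc : ContinuousOn w (Icc 0 t) := by
    intro s hs
    have : ContinuousAt w s := by
      have hzc : ContinuousAt z s := (hz s hs.1).continuousAt
      exact hzc.mul (((hGd s).continuousAt).neg.rexp)
    exact this.continuousWithinAt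
  have hconst := constant_of_has_deriv_right_zero hwc hwd t (right_mem_Icc.2 ht)
  have hG0 : G 0 = 0 := by simp [hG]
  have hw0 : w 0 = z 0 := by simp [hw, hG0]
  refine ⟨Real.exp (G t), Real.exp_pos _, ?_⟩
  have : z t * Real.exp (-G t) = z 0 := by rw [← hw0]; exact hconst
  have he : Real.exp (-G t) * Real.exp (G t) = 1 := by
    rw [← Real.exp_add]; simp
  calc z t = z t * (Real.exp (-G t) * Real.exp (G t)) := by rw [he, mul_one]
  _ = (z t * Real.exp (-G t)) * Real.exp (G t) := by ring
  _ = z 0 * Real.exp (G t) := by rw [this]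

lemma antitoneOn_of_hasDerivAt_nonpos {f d : ℝ → ℝ} {T : ℝ}
    (hf : ∀ t, T ≤ t → HasDerivAt f (d t) t) (h : ∀ t, T < t → d t ≤ 0) :
    AntitoneOn f (Ici T) := by
  apply antitoneOn_of_deriv_nonpos (convex_Ici T)
  · exact fun t ht => (hf t ht).continuousAt.continuousWithinAt
  · intro t ht
    rw [interior_Ici] at ht
    exact (hf t ht.le).differentiableAt.differentiableWithinAt
  · intro t ht
    rw [interior_Ici] at ht
    rw [(hf t ht.le).deriv]
    exact h t ht

lemma monotoneOn_of_hasDerivAt_nonneg {f d : ℝ → ℝ} {T : ℝ}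
    (hf : ∀ t, T ≤ t → HasDerivAt f (d t) t) (h : ∀ t, T < t → 0 ≤ d t) :
    MonotoneOn f (Ici T) := by
  apply monotoneOn_of_deriv_nonneg (convex_Ici T)
  · exact fun t ht => (hf t ht).continuousAt.continuousWithinAt
  · intro t ht
    rw [interior_Ici] at ht
    exact (hf t ht.le).differentiableAt.differentiableWithinAt
  · intro t ht
    rw [interior_Ici] at ht
    rw [(hf t ht.le).deriv]
    exact h t ht

lemma tendsto_of_antitoneOn {f : ℝ → ℝ} {T b : ℝ}
    (hf : AntitoneOn f (Ici T)) (hb : ∀ t, T ≤ t → b ≤ f t) :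
    ∃ L, b ≤ L ∧ Tendsto f atTop (𝓝 L) ∧ ∀ t, T ≤ t → L ≤ f t := by
  set g : ℝ → ℝ := fun t => f (max t T) with hg
  have hga : Antitone g := by
    intro s t hst
    exact hf (le_max_right s T) (le_max_right t T) (max_le_max hst le_rfl)
  have hgb : BddBelow (range g) := ⟨b, by rintro _ ⟨t, rfl⟩; exact hb _ (le_max_right _ _)⟩
  have hgt : Tendsto g atTop (𝓝 (⨅ t, g t)) := tendsto_atTop_ciInf hga hgb
  have heq : f =ᶠ[atTop] g := by
    filter_upwards [eventually_ge_atTop T] with t ht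
    simp [hg, max_eq_left ht]
  refine ⟨⨅ t, g t, ?_, Tendsto.congr' heq.symm hgt, ?_⟩
  · exact le_ciInf fun t => hb _ (le_max_right _ _)
  · intro t ht
    have := ciInf_le hgb t
    simpa [hg, max_eq_left ht] using this

lemma tendsto_of_monotoneOn {f : ℝ → ℝ} {T b : ℝ}
    (hf : MonotoneOn f (Ici T)) (hb : ∀ t, T ≤ t → f t ≤ b) :
    ∃ L, L ≤ b ∧ Tendsto f atTop (𝓝 L) ∧ ∀ t, T ≤ t → f t ≤ L := by
  have hf' : AntitoneOn (fun t => -(f t)) (Ici T) := fun s hs t ht hst => neg_le_neg (hf hs ht hst)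
  obtain ⟨L, hL1, hL2, hL3⟩ := tendsto_of_antitoneOn hf' (b := -b) (fun t ht => neg_le_neg (hb t ht))
  refine ⟨-L, by linarith, ?_, fun t ht => by linarith [hL3 t ht]⟩
  have := hL2.neg
  simpa using this

lemma deriv_limit_zero {f d : ℝ → ℝ} {T L c : ℝ}
    (hf : ∀ t, T ≤ t → HasDerivAt f (d t) t)
    (hL : Tendsto f atTop (𝓝 L)) (hc : Tendsto d atTop (𝓝 c)) : c = 0 := by
  by_contra hne
  rcases lt_or_gt_of_ne hne with hneg | hpos
  · -- d eventually ≤ c/2 < 0, so f decreases linearly, contradiction with convergence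
    have hev : ∀ᶠ t in atTop, d t < c/2 := hc.eventually_lt_const (by linarith)
    obtain ⟨T₀, hT₀⟩ := (hev.and (eventually_ge_atTop T)).exists_forall_of_atTop
    -- f t + (-(c/2)) * t is antitone on [T₀, ∞)? rather f t - (c/2) t is antitone
    have hmono : AntitoneOn (fun t => f t - (c/2) * t) (Ici T₀) := by
      apply antitoneOn_of_hasDerivAt_nonpos (d := fun t => d t - c/2)
      · intro t ht
        have hid : HasDerivAt (fun s : ℝ => (c/2) * s) (c/2) t := by
          simpa using (hasDerivAt_id t).const_mul (c/2)
        exact (hf t ((hT₀ t ht).2)).sub hid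
      · intro t ht
        linarith [(hT₀ t ht.le).1]
    -- then f t ≤ f T₀ + (c/2)(t - T₀) → -∞
    have hub : ∀ᶠ t in atTop, L - 1 ≤ f t := hL.eventually_const_le (by linarith : L - 1 < L)
    have hc2 : c/2 < 0 := by linarith
    obtain ⟨t, ht1, ht2⟩ := ((eventually_ge_atTop (max T₀ ((L - 2 - (f T₀ - (c/2)*T₀))/(c/2) ))).and hub).exists
    have h1 : f t - (c/2)*t ≤ f T₀ - (c/2)*T₀ :=
      hmono (le_refl T₀ : T₀ ∈ Ici T₀) (le_trans (le_max_left _ _) ht1) (le_trans (le_max_left _ _) ht1)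
    have h2 : (L - 2 - (f T₀ - (c/2)*T₀))/(c/2) ≤ t := le_trans (le_max_right _ _) ht1
    have h3 : t * (c/2) ≤ L - 2 - (f T₀ - (c/2)*T₀) := (div_le_iff_of_neg hc2).mp h2
    linarith
  · have hev : ∀ᶠ t in atTop, d t > c/2 := hc.eventually_const_lt (by linarith)
    obtain ⟨T₀, hT₀⟩ := (hev.and (eventually_ge_atTop T)).exists_forall_of_atTop
    have hmono : MonotoneOn (fun t => f t - (c/2) * t) (Ici T₀) := by
      apply monotoneOn_of_hasDerivAt_nonneg (d := fun t => d t - c/2)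
      · intro t ht
        have hid : HasDerivAt (fun s : ℝ => (c/2) * s) (c/2) t := by
          simpa using (hasDerivAt_id t).const_mul (c/2)
        exact (hf t ((hT₀ t ht).2)).sub hid
      · intro t ht
        linarith [(hT₀ t ht.le).1]
    have hub : ∀ᶠ t in atTop, f t ≤ L + 1 := hL.eventually_le_const (by linarith : L < L + 1)
    have hc2 : 0 < c/2 := by linarith
    obtain ⟨t, ht1, ht2⟩ := ((eventually_ge_atTop (max T₀ ((L + 2 - (f T₀ - (c/2)*T₀))/(c/2) ))).and hub).exists
    have h1 : f T₀ - (c/2)*T₀ ≤ f t - (c/2)*t :=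
      hmono (le_refl T₀ : T₀ ∈ Ici T₀) (le_trans (le_max_left _ _) ht1) (le_trans (le_max_left _ _) ht1)
    have h2 : (L + 2 - (f T₀ - (c/2)*T₀))/(c/2) ≤ t := le_trans (le_max_right _ _) ht1
    have h3 : L + 2 - (f T₀ - (c/2)*T₀) ≤ t * (c/2) := (div_le_iff₀ hc2).mp h2
    linarith

/-- Barrier lemma: once below 0, stays below 0, if the derivative is negative on the zero set. -/
lemma barrier {g dg : ℝ → ℝ} {t₁ : ℝ}
    (hg : ∀ t, t₁ ≤ t → HasDerivAt g (dg t) t)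
    (h0 : g t₁ ≤ 0) (hneg : ∀ t, t₁ ≤ t → g t = 0 → dg t < 0) :
    ∀ t, t₁ ≤ t → g t ≤ 0 := by
  intro s hs
  by_contra hgs
  push_neg at hgs
  have hgc : Continuous (fun t => g (max t t₁)) :=
    cont_tilde (fun t ht => (hg t ht).continuousAt)
  set K := Icc t₁ s ∩ {t | g (max t t₁) ≤ 0} with hK
  have hKc : IsClosed K := isClosed_Icc.inter (isClosed_le hgc continuous_const)
  have hKne : K.Nonempty := ⟨t₁, ⟨le_rfl, hs⟩, by simp [h0]⟩
  have hKbdd : BddAbove K := ⟨s, fun t ht => ht.1.2⟩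
  set σ := sSup K with hσ
  have hσK : σ ∈ K := hKc.csSup_mem hKne hKbdd
  have hσ1 : t₁ ≤ σ := hσK.1.1
  have hσ2 : g σ ≤ 0 := by
    have := hσK.2
    simp only [Set.mem_setOf_eq, max_eq_left hσ1] at this
    exact this
  have hσs : σ < s := by
    rcases lt_or_eq_of_le hσK.1.2 with h | h
    · exact h
    · exfalso; rw [h] at hσ2; exact absurd hσ2 (not_le.2 hgs)
  have hpos : ∀ t, σ < t → t ≤ s → 0 < g t := by
    intro t ht hts
    by_contra hle
    push_neg at hle
    have htK : t ∈ K := ⟨⟨le_trans hσ1 ht.le, hts⟩, by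
      rw [Set.mem_setOf_eq, max_eq_left (le_trans hσ1 ht.le)]; exact hle⟩
    exact absurd (le_csSup hKbdd htK) (not_le.2 ht)
  have hσ0 : g σ = 0 := by
    rcases lt_or_eq_of_le hσ2 with hlt | heq
    · have hcont : ContinuousAt g σ := (hg σ hσ1).continuousAt
      have htd : Tendsto g (𝓝[>] σ) (𝓝 (g σ)) := hcont.continuousWithinAt
      have hev : ∀ᶠ t in 𝓝[>] σ, 0 < g t := by
        have hmem : Ioc σ s ∈ 𝓝[>] σ := Ioc_mem_nhdsGT_of_mem ⟨le_rfl, hσs⟩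
        filter_upwards [hmem] with t ht using hpos t ht.1 ht.2
      have : 0 ≤ g σ := ge_of_tendsto htd (hev.mono fun t ht => ht.le)
      linarith
    · exact heq
  have hdneg := hneg σ hσ1 hσ0
  have hev := eventually_right_of_deriv_neg (hg σ hσ1) hdneg
  have hmem : Ioc σ s ∈ 𝓝[>] σ := Ioc_mem_nhdsGT_of_mem ⟨le_rfl, hσs⟩
  obtain ⟨t, ht1, ht2⟩ := (hev.and (by filter_upwards [hmem] with t ht using ht)).exists
  have := hpos t ht2.1 ht2.2
  rw [hσ0] at ht1
  linarith

lemma first_exit {A : Set ℝ} (hA : IsClosed A) (hne : A.Nonempty)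
    (hsub : A ⊆ Ici 0) (h0 : (0:ℝ) ∉ A) :
    ∃ τ, 0 < τ ∧ τ ∈ A ∧ ∀ t, 0 ≤ t → t < τ → t ∉ A := by
  have hbdd : BddBelow A := ⟨0, fun a ha => hsub ha⟩
  set τ := sInf A with hτ
  have hτA : τ ∈ A := hA.csInf_mem hne hbdd
  have hτ0 : 0 ≤ τ := hsub hτA
  have hτne : τ ≠ 0 := by rintro h; rw [h] at hτA; exact h0 hτA
  refine ⟨τ, lt_of_le_of_ne hτ0 (Ne.symm hτne), hτA, fun t _ htlt hmem => ?_⟩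
  exact absurd (csInf_le hbdd hmem) (not_le.2 htlt)

end TruncHelp2
open Real Filter Set Topology TruncHelp TruncHelp2

namespace TruncHelp3

lemma x_lt_a {x y : ℝ → ℝ} {a : ℝ}
    (hxd : ∀ t, 0 ≤ t → HasDerivAt x (x t * (y t - P (x t))) t)
    (ha : 0 < a) (hx0a : x 0 < a)
    (hylow : ∀ t, 0 ≤ t → y t < P a) :
    ∀ t, 0 ≤ t → x t < a := by
  have hxc : ∀ t, 0 ≤ t → ContinuousAt x t := fun t ht => (hxd t ht).continuousAt
  set X : ℝ → ℝ := fun t => x (max t 0) with hX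
  have hXc : Continuous X := cont_tilde hxc
  by_contra hcon
  push_neg at hcon
  obtain ⟨s, hs0, hsa⟩ := hcon
  set A : Set ℝ := Ici 0 ∩ {t | a ≤ X t} with hA
  have hAc : IsClosed A := isClosed_Ici.inter (isClosed_le continuous_const hXc)
  have hne : A.Nonempty := ⟨s, hs0, by simpa [hX, max_eq_left hs0] using hsa⟩
  have h0 : (0:ℝ) ∉ A := by
    rintro ⟨-, hmem⟩
    simp only [hX, mem_setOf_eq, max_self] at hmem
    exact absurd hmem (not_le.2 hx0a)
  obtain ⟨τ, hτpos, hτA, hpre⟩ := first_exit hAc hne inter_subset_left h0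
  have hXτ : X τ = x τ := by simp [hX, max_eq_left hτpos.le]
  have hxτa : a ≤ x τ := by have := hτA.2; rwa [mem_setOf_eq, hXτ] at this
  have hlt : ∀ t, t < τ → X t < a := by
    intro t ht
    rcases le_or_gt 0 t with h | h
    · have := hpre t h ht
      simp only [hA, mem_inter_iff, mem_Ici, mem_setOf_eq, not_and, not_le] at this
      exact this h
    · simpa [hX, max_eq_right h.le] using hx0a
  have hle : x τ ≤ a := by
    have htd : Tendsto X (𝓝[<] τ) (𝓝 (X τ)) := hXc.continuousAt.continuousWithinAt
    have := le_of_tendsto htd (eventually_nhdsWithin_of_forall fun t ht => (hlt t ht).le)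
    rwa [hXτ] at this
  have hxeq : x τ = a := le_antisymm hle hxτa
  have hd : x τ * (y τ - P (x τ)) < 0 := by
    rw [hxeq]
    exact mul_neg_of_pos_of_neg ha (sub_neg.2 (hylow τ hτpos.le))
  have hev := eventually_left_of_deriv_neg (hxd τ hτpos.le) hd
  have hmem : Ioo 0 τ ∈ 𝓝[<] τ := Ioo_mem_nhdsLT_of_mem ⟨hτpos, le_rfl⟩
  obtain ⟨t, ht1, ht2⟩ := (hev.and (by filter_upwards [hmem] with t ht using ht)).exists
  have h3 := hlt t ht2.2
  rw [hxeq] at ht1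
  rw [hX] at h3
  simp only [max_eq_left ht2.1.le] at h3
  linarith

end TruncHelp3
namespace TruncHelp3

/-- Conclusion bundle -/
def Concl (x y : ℝ → ℝ) (a : ℝ) : Prop :=
  (∀ t, 0 ≤ t → |x t| < a ∧ |y t| < a^2) ∧
  Tendsto x atTop (𝓝 0) ∧ Tendsto y atTop (𝓝 0)

section cases
variable {k : ℕ} {x y : ℝ → ℝ} {a : ℝ}

/-- Case x 0 = 0. -/
lemma caseA (hk : 2 ≤ k) (hke : Even k)
    (hxd : ∀ t, 0 ≤ t → HasDerivAt x (x t * (y t - P (x t))) t)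
    (hyd : ∀ t, 0 ≤ t → HasDerivAt y (-(y t)^2 * (y t - Q k (x t))) t)
    (ha : 0 < a) (ha1 : a ≤ 1) (hx0 : x 0 = 0) (hy0 : |y 0| < 3/8 * a^2) :
    Concl x y a := by
  have hxc : ∀ t, 0 ≤ t → ContinuousAt x t := fun t ht => (hxd t ht).continuousAt
  have hyc : ∀ t, 0 ≤ t → ContinuousAt y t := fun t ht => (hyd t ht).continuousAt
  have hgc : ∀ t, 0 ≤ t → ContinuousAt (fun t => y t - P (x t)) t := fun t ht =>
    (hyc t ht).sub ((contP.continuousAt).comp (hxc t ht))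
  have hxz : ∀ t, 0 ≤ t → x t = 0 := by
    intro t ht
    obtain ⟨c, -, hc⟩ := expSign hxd hgc t ht
    rw [hc, hx0, zero_mul]
  have hxtend : Tendsto x atTop (𝓝 0) := by
    apply Tendsto.congr' (f₁ := fun _ => (0:ℝ))
    · filter_upwards [eventually_ge_atTop (0:ℝ)] with t ht using (hxz t ht).symm
    · exact tendsto_const_nhds
  have hQ0 : ∀ t, 0 ≤ t → Q k (x t) = 0 := by
    intro t ht; rw [hxz t ht]; simp [Q]
  -- y sign
  have hygc : ∀ t, 0 ≤ t → ContinuousAt (fun t => -(y t) * (y t - Q k (x t))) t := fun t ht =>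
    ((hyc t ht).neg).mul ((hyc t ht).sub ((contQ k).continuousAt.comp (hxc t ht)))
  have hyd' : ∀ t, 0 ≤ t → HasDerivAt y (y t * (-(y t) * (y t - Q k (x t)))) t := by
    intro t ht
    have := hyd t ht
    convert this using 1; ring
  have hysgn := expSign hyd' hygc
  have hxbd : ∀ t, 0 ≤ t → |x t| < a := fun t ht => by rw [hxz t ht]; simpa using ha
  rcases lt_trichotomy (y 0) 0 with hneg | hzero | hpos
  · -- y < 0, increasing to 0
    have hyneg : ∀ t, 0 ≤ t → y t < 0 := by
      intro t ht
      obtain ⟨c, hcpos, hc⟩ := hysgn t ht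
      rw [hc]; exact mul_neg_of_neg_of_pos hneg hcpos
    have hmono : MonotoneOn y (Ici 0) := by
      apply monotoneOn_of_hasDerivAt_nonneg (d := fun t => -(y t)^2 * (y t - Q k (x t))) hyd
      intro t ht
      have h1 : y t - Q k (x t) < 0 := by rw [hQ0 t ht.le]; simpa using hyneg t ht.le
      nlinarith [sq_nonneg (y t)]
    obtain ⟨L, hLb, hytd, hyle⟩ := tendsto_of_monotoneOn hmono (b := 0)
      (fun t ht => (hyneg t ht).le)
    have hdytd : Tendsto (fun t => -(y t)^2 * (y t - Q k (x t))) atTop (𝓝 (-L^2 * (L - Q k 0))) := by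
      have hq : Tendsto (fun t => Q k (x t)) atTop (𝓝 (Q k 0)) :=
        ((contQ k).tendsto 0).comp hxtend
      exact ((hytd.pow 2).neg).mul (hytd.sub hq)
    have hz := deriv_limit_zero hyd hytd hdytd
    have hQ00 : Q k (0:ℝ) = 0 := by simp [Q]
    rw [hQ00, sub_zero] at hz
    have h3 : L^3 = 0 := by linear_combination -hz
    have hL0 : L = 0 := pow_eq_zero_iff (three_ne_zero) |>.mp h3
    rw [hL0] at hytd
    refine ⟨fun t ht => ⟨hxbd t ht, ?_⟩, hxtend, hytd⟩
    have h1 := hyle 0 le_rfl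
    have h2 := hmono (self_mem_Ici) (mem_Ici.2 ht) ht
    have h3 := hyneg t ht
    rw [abs_of_neg h3]
    rw [abs_of_neg hneg] at hy0
    linarith
  · -- y ≡ 0
    have hyz : ∀ t, 0 ≤ t → y t = 0 := by
      intro t ht
      obtain ⟨c, -, hc⟩ := hysgn t ht
      rw [hc, hzero, zero_mul]
    have hytd : Tendsto y atTop (𝓝 0) := by
      apply Tendsto.congr' (f₁ := fun _ => (0:ℝ))
      · filter_upwards [eventually_ge_atTop (0:ℝ)] with t ht using (hyz t ht).symm
      · exact tendsto_const_nhds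
    exact ⟨fun t ht => ⟨hxbd t ht, by rw [hyz t ht]; simpa using pow_pos ha 2⟩, hxtend, hytd⟩
  · -- y > 0, decreasing to 0
    have hypos : ∀ t, 0 ≤ t → 0 < y t := by
      intro t ht
      obtain ⟨c, hcpos, hc⟩ := hysgn t ht
      rw [hc]; exact mul_pos hpos hcpos
    have hmono : AntitoneOn y (Ici 0) := by
      apply antitoneOn_of_hasDerivAt_nonpos (d := fun t => -(y t)^2 * (y t - Q k (x t))) hyd
      intro t ht
      have h1 : 0 < y t - Q k (x t) := by rw [hQ0 t ht.le]; simpa using hypos t ht.le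
      nlinarith [sq_nonneg (y t)]
    obtain ⟨L, hLb, hytd, hyle⟩ := tendsto_of_antitoneOn hmono (b := 0)
      (fun t ht => (hypos t ht).le)
    have hdytd : Tendsto (fun t => -(y t)^2 * (y t - Q k (x t))) atTop (𝓝 (-L^2 * (L - Q k 0))) := by
      have hq : Tendsto (fun t => Q k (x t)) atTop (𝓝 (Q k 0)) :=
        ((contQ k).tendsto 0).comp hxtend
      exact ((hytd.pow 2).neg).mul (hytd.sub hq)
    have hz := deriv_limit_zero hyd hytd hdytd
    have hQ00 : Q k (0:ℝ) = 0 := by simp [Q]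
    rw [hQ00, sub_zero] at hz
    have h3 : L^3 = 0 := by linear_combination -hz
    have hL0 : L = 0 := pow_eq_zero_iff (three_ne_zero) |>.mp h3
    rw [hL0] at hytd
    refine ⟨fun t ht => ⟨hxbd t ht, ?_⟩, hxtend, hytd⟩
    have h2 := hmono (self_mem_Ici) (mem_Ici.2 ht) ht
    have h3 := hypos t ht
    rw [abs_of_pos h3]
    rw [abs_of_pos hpos] at hy0
    nlinarith

end cases
end TruncHelp3
namespace TruncHelp3
section cases
variable {k : ℕ} {x y : ℝ → ℝ} {a : ℝ}

/-- Case x 0 > 0, y 0 = 0. -/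
lemma caseB (hk : 2 ≤ k) (hke : Even k)
    (hxd : ∀ t, 0 ≤ t → HasDerivAt x (x t * (y t - P (x t))) t)
    (hyd : ∀ t, 0 ≤ t → HasDerivAt y (-(y t)^2 * (y t - Q k (x t))) t)
    (ha : 0 < a) (ha1 : a ≤ 1) (hx0 : 0 < x 0) (hx0a : x 0 < a) (hy0 : y 0 = 0) :
    Concl x y a := by
  have hxc : ∀ t, 0 ≤ t → ContinuousAt x t := fun t ht => (hxd t ht).continuousAt
  have hyc : ∀ t, 0 ≤ t → ContinuousAt y t := fun t ht => (hyd t ht).continuousAt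
  -- y ≡ 0
  have hygc : ∀ t, 0 ≤ t → ContinuousAt (fun t => -(y t) * (y t - Q k (x t))) t := fun t ht =>
    ((hyc t ht).neg).mul ((hyc t ht).sub (((contQ k).tendsto _).comp (hxc t ht)))
  have hyd' : ∀ t, 0 ≤ t → HasDerivAt y (y t * (-(y t) * (y t - Q k (x t)))) t := by
    intro t ht
    have := hyd t ht
    convert this using 1; ring
  have hyz : ∀ t, 0 ≤ t → y t = 0 := by
    intro t ht
    obtain ⟨c, -, hc⟩ := expSign hyd' hygc t ht
    rw [hc, hy0, zero_mul]
  have hytd : Tendsto y atTop (𝓝 0) := by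
    apply Tendsto.congr' (f₁ := fun _ => (0:ℝ))
    · filter_upwards [eventually_ge_atTop (0:ℝ)] with t ht using (hyz t ht).symm
    · exact tendsto_const_nhds
  -- x > 0
  have hgc : ∀ t, 0 ≤ t → ContinuousAt (fun t => y t - P (x t)) t := fun t ht =>
    (hyc t ht).sub ((contP.tendsto _).comp (hxc t ht))
  have hxpos : ∀ t, 0 ≤ t → 0 < x t := by
    intro t ht
    obtain ⟨c, hcpos, hc⟩ := expSign hxd hgc t ht
    rw [hc]; exact mul_pos hx0 hcpos
  -- x < a
  have hxa : ∀ t, 0 ≤ t → x t < a := by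
    apply x_lt_a hxd ha hx0a
    intro t ht
    rw [hyz t ht]
    exact P_pos ha ha1
  -- x antitone
  have hmono : AntitoneOn x (Ici 0) := by
    apply antitoneOn_of_hasDerivAt_nonpos (d := fun t => x t * (y t - P (x t))) hxd
    intro t ht
    have h1 : y t - P (x t) ≤ 0 := by
      rw [hyz t ht.le]
      simpa using P_nonneg (hxpos t ht.le).le (le_trans (hxa t ht.le).le ha1)
    exact mul_nonpos_of_nonneg_of_nonpos (hxpos t ht.le).le h1
  obtain ⟨L, hLb, hxtd, hxge⟩ := tendsto_of_antitoneOn hmono (b := 0)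
    (fun t ht => (hxpos t ht).le)
  have hdxtd : Tendsto (fun t => x t * (y t - P (x t))) atTop (𝓝 (L * (0 - P L))) :=
    hxtd.mul (hytd.sub ((contP.tendsto _).comp hxtd))
  have hz := deriv_limit_zero hxd hxtd hdxtd
  have hL0 : L = 0 := by
    by_contra hne
    have hLpos : 0 < L := lt_of_le_of_ne hLb (Ne.symm hne)
    have hL1 : L ≤ 1 := le_trans (le_trans (hxge 0 le_rfl) (hxa 0 le_rfl).le) ha1
    have := P_pos hLpos hL1
    nlinarith
  rw [hL0] at hxtd
  refine ⟨fun t ht => ⟨?_, ?_⟩, hxtd, hytd⟩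
  · rw [abs_of_pos (hxpos t ht)]; exact hxa t ht
  · rw [hyz t ht]; simpa using pow_pos ha 2

/-- Case x 0 > 0, y 0 < 0. -/
lemma caseC (hk : 2 ≤ k) (hke : Even k)
    (hxd : ∀ t, 0 ≤ t → HasDerivAt x (x t * (y t - P (x t))) t)
    (hyd : ∀ t, 0 ≤ t → HasDerivAt y (-(y t)^2 * (y t - Q k (x t))) t)
    (ha : 0 < a) (ha1 : a ≤ 1) (hx0 : 0 < x 0) (hx0a : x 0 < a)
    (hy0 : y 0 < 0) (hy0b : |y 0| < 3/8 * a^2) :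
    Concl x y a := by
  have hxc : ∀ t, 0 ≤ t → ContinuousAt x t := fun t ht => (hxd t ht).continuousAt
  have hyc : ∀ t, 0 ≤ t → ContinuousAt y t := fun t ht => (hyd t ht).continuousAt
  have hygc : ∀ t, 0 ≤ t → ContinuousAt (fun t => -(y t) * (y t - Q k (x t))) t := fun t ht =>
    ((hyc t ht).neg).mul ((hyc t ht).sub (((contQ k).tendsto _).comp (hxc t ht)))
  have hyd' : ∀ t, 0 ≤ t → HasDerivAt y (y t * (-(y t) * (y t - Q k (x t)))) t := by
    intro t ht
    have := hyd t ht
    convert this using 1; ring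
  have hyneg : ∀ t, 0 ≤ t → y t < 0 := by
    intro t ht
    obtain ⟨c, hcpos, hc⟩ := expSign hyd' hygc t ht
    rw [hc]; exact mul_neg_of_neg_of_pos hy0 hcpos
  have hgc : ∀ t, 0 ≤ t → ContinuousAt (fun t => y t - P (x t)) t := fun t ht =>
    (hyc t ht).sub ((contP.tendsto _).comp (hxc t ht))
  have hxpos : ∀ t, 0 ≤ t → 0 < x t := by
    intro t ht
    obtain ⟨c, hcpos, hc⟩ := expSign hxd hgc t ht
    rw [hc]; exact mul_pos hx0 hcpos
  have hxa : ∀ t, 0 ≤ t → x t < a :=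
    x_lt_a hxd ha hx0a (fun t ht => lt_trans (hyneg t ht) (P_pos ha ha1))
  -- y monotone increasing
  have hymono : MonotoneOn y (Ici 0) := by
    apply monotoneOn_of_hasDerivAt_nonneg (d := fun t => -(y t)^2 * (y t - Q k (x t))) hyd
    intro t ht
    have hq : 0 < Q k (x t) := Q_pos hk hke (hxpos t ht.le) (le_trans (hxa t ht.le).le ha1)
    have h1 : y t - Q k (x t) < 0 := by have := hyneg t ht.le; linarith
    nlinarith [sq_nonneg (y t)]
  obtain ⟨Ly, hLyb, hytd, hyle⟩ := tendsto_of_monotoneOn hymono (b := 0)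
    (fun t ht => (hyneg t ht).le)
  -- x antitone
  have hxmono : AntitoneOn x (Ici 0) := by
    apply antitoneOn_of_hasDerivAt_nonpos (d := fun t => x t * (y t - P (x t))) hxd
    intro t ht
    have h1 : y t - P (x t) ≤ 0 := by
      have := hyneg t ht.le
      have := P_nonneg (hxpos t ht.le).le (le_trans (hxa t ht.le).le ha1)
      linarith
    exact mul_nonpos_of_nonneg_of_nonpos (hxpos t ht.le).le h1
  obtain ⟨Lx, hLxb, hxtd, hxge⟩ := tendsto_of_antitoneOn hxmono (b := 0)
    (fun t ht => (hxpos t ht).le)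
  have hdxtd : Tendsto (fun t => x t * (y t - P (x t))) atTop (𝓝 (Lx * (Ly - P Lx))) :=
    hxtd.mul (hytd.sub ((contP.tendsto _).comp hxtd))
  have hdytd : Tendsto (fun t => -(y t)^2 * (y t - Q k (x t))) atTop
      (𝓝 (-Ly^2 * (Ly - Q k Lx))) :=
    ((hytd.pow 2).neg).mul (hytd.sub (((contQ k).tendsto _).comp hxtd))
  have hzx := deriv_limit_zero hxd hxtd hdxtd
  have hzy := deriv_limit_zero hyd hytd hdytd
  have hLx0 : Lx = 0 := by
    by_contra hne
    have hLxpos : 0 < Lx := lt_of_le_of_ne hLxb (Ne.symm hne)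
    have hLx1 : Lx ≤ 1 := le_trans (le_trans (hxge 0 le_rfl) (hxa 0 le_rfl).le) ha1
    have hP := P_pos hLxpos hLx1
    have hLy : Ly = P Lx := by
      have : Ly - P Lx = 0 := by
        rcases mul_eq_zero.mp hzx with h | h
        · exact absurd h hne
        · exact h
      linarith
    nlinarith
  have hLy0 : Ly = 0 := by
    rw [hLx0] at hzy
    have hQ00 : Q k (0:ℝ) = 0 := by simp [Q]
    rw [hQ00, sub_zero] at hzy
    have h3 : Ly^3 = 0 := by linear_combination -hzy
    exact pow_eq_zero_iff (three_ne_zero) |>.mp h3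
  rw [hLx0] at hxtd
  rw [hLy0] at hytd
  refine ⟨fun t ht => ⟨?_, ?_⟩, hxtd, hytd⟩
  · rw [abs_of_pos (hxpos t ht)]; exact hxa t ht
  · have h2 := hymono (self_mem_Ici) (mem_Ici.2 ht) ht
    have h3 := hyneg t ht
    rw [abs_of_neg h3]
    rw [abs_of_neg hy0] at hy0b
    nlinarith

end cases
end TruncHelp3
namespace TruncHelp3
section cases
variable {k : ℕ} {x y : ℝ → ℝ} {a : ℝ}

/-- Invariance for the case x 0 > 0, y 0 > 0. -/
lemma caseD_inv (hk : 2 ≤ k) (hke : Even k)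
    (hxd : ∀ t, 0 ≤ t → HasDerivAt x (x t * (y t - P (x t))) t)
    (hyd : ∀ t, 0 ≤ t → HasDerivAt y (-(y t)^2 * (y t - Q k (x t))) t)
    (ha : 0 < a) (ha1 : a ≤ 1) (hx0 : 0 < x 0) (hx0a : x 0 < a)
    (hy0 : 0 < y 0) (hy0b : y 0 < 3/8 * a^2)
    (hxpos : ∀ t, 0 ≤ t → 0 < x t) (hypos : ∀ t, 0 ≤ t → 0 < y t) :
    ∀ t, 0 ≤ t → x t < a ∧ y t < max (3/8 * a^2) (P (x t)) := by
  set D2 : ℝ := 3/8 * a^2 with hD2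
  have hD2pos : 0 < D2 := by rw [hD2]; positivity
  have hD2P : D2 < P a := lt_of_lt_of_le (by rw [hD2]; nlinarith) (P_ge ha ha1)
  have hxc : ∀ t, 0 ≤ t → ContinuousAt x t := fun t ht => (hxd t ht).continuousAt
  have hyc : ∀ t, 0 ≤ t → ContinuousAt y t := fun t ht => (hyd t ht).continuousAt
  set X : ℝ → ℝ := fun t => x (max t 0) with hX
  set Y : ℝ → ℝ := fun t => y (max t 0) with hY
  have hXc : Continuous X := cont_tilde hxc
  have hYc : Continuous Y := cont_tilde hyc
  by_contra hcon
  push_neg at hcon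
  obtain ⟨s, hs0, hsbad⟩ := hcon
  set A : Set ℝ := Ici 0 ∩ ({t | a ≤ X t} ∪ {t | max D2 (P (X t)) ≤ Y t}) with hA
  have hAc : IsClosed A := isClosed_Ici.inter
    ((isClosed_le continuous_const hXc).union
      (isClosed_le (continuous_const.max (contP.comp hXc)) hYc))
  have hne : A.Nonempty := by
    refine ⟨s, hs0, ?_⟩
    by_cases h : a ≤ x s
    · left; simpa [hX, max_eq_left hs0] using h
    · right
      push_neg at h
      have := hsbad h
      simpa [hX, hY, max_eq_left hs0] using this
  have h0 : (0:ℝ) ∉ A := by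
    rintro ⟨-, hmem⟩
    rcases hmem with h | h
    · simp only [hX, mem_setOf_eq, max_self] at h
      exact absurd h (not_le.2 hx0a)
    · simp only [hX, hY, mem_setOf_eq, max_self] at h
      have : D2 ≤ y 0 := le_trans (le_max_left _ _) h
      linarith
  obtain ⟨τ, hτpos, hτA, hpre'⟩ := first_exit hAc hne inter_subset_left h0
  have hXτ : X τ = x τ := by simp [hX, max_eq_left hτpos.le]
  have hYτ : Y τ = y τ := by simp [hY, max_eq_left hτpos.le]
  have hpre : ∀ t, 0 ≤ t → t < τ → x t < a ∧ y t < max D2 (P (x t)) := by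
    intro t ht htτ
    have := hpre' t ht htτ
    simp only [hA, mem_inter_iff, mem_Ici, mem_union, mem_setOf_eq, not_and, not_or,
      not_le] at this
    have h2 := this ht
    rw [hX, hY] at h2
    simp only [max_eq_left ht] at h2
    exact h2
  -- boundary values at τ
  have hXlt : ∀ t, t < τ → X t < a := by
    intro t ht
    rcases le_or_gt 0 t with h | h
    · have := (hpre t h ht).1
      simpa [hX, max_eq_left h] using this
    · simpa [hX, max_eq_right h.le] using hx0a
  have hYlt : ∀ t, t < τ → Y t < max D2 (P (X t)) := by
    intro t ht
    rcases le_or_gt 0 t with h | h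
    · have := (hpre t h ht).2
      simpa [hX, hY, max_eq_left h] using this
    · have : y 0 < D2 := hy0b
      simp only [hX, hY, max_eq_right h.le]
      exact lt_of_lt_of_le this (le_max_left _ _)
  have hxτle : x τ ≤ a := by
    have htd : Tendsto X (𝓝[<] τ) (𝓝 (X τ)) := hXc.continuousAt.continuousWithinAt
    have := le_of_tendsto htd (eventually_nhdsWithin_of_forall fun t ht => (hXlt t ht).le)
    rwa [hXτ] at this
  have hyτle : y τ ≤ max D2 (P (x τ)) := by
    have htd : Tendsto (fun t => max D2 (P (X t)) - Y t) (𝓝[<] τ)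
        (𝓝 (max D2 (P (X τ)) - Y τ)) :=
      ((continuous_const.max (contP.comp hXc)).sub hYc).continuousAt.continuousWithinAt
    have h1 : 0 ≤ max D2 (P (X τ)) - Y τ :=
      ge_of_tendsto htd (eventually_nhdsWithin_of_forall fun t ht =>
        sub_nonneg.2 (hYlt t ht).le)
    rw [hXτ, hYτ] at h1
    linarith
  have hxτ1 : x τ ≤ 1 := le_trans hxτle ha1
  have hxτpos : 0 < x τ := hxpos τ hτpos.le
  have hyτpos : 0 < y τ := hypos τ hτpos.le
  have hmemIoo : Ioo 0 τ ∈ 𝓝[<] τ := Ioo_mem_nhdsLT_of_mem ⟨hτpos, le_rfl⟩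
  -- the function g = y - P ∘ x and its derivative
  have hgd : ∀ t, 0 ≤ t → HasDerivAt (fun t => y t - P (x t))
      (-(y t)^2 * (y t - Q k (x t)) - Pd (x t) * (x t * (y t - P (x t)))) t := by
    intro t ht
    exact (hyd t ht).sub ((hasDerivAt_P (x t)).comp t (hxd t ht))
  have hτmem : a ≤ x τ ∨ max D2 (P (x τ)) ≤ y τ := by
    have := hτA.2
    rcases this with h | h
    · left; rwa [mem_setOf_eq, hXτ] at h
    · right; rwa [mem_setOf_eq, hXτ, hYτ] at h
  rcases hτmem with hc1 | hc2
  · -- x τ = a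
    have hxeq : x τ = a := le_antisymm hxτle hc1
    have hyPa : y τ ≤ P a := by
      have := hyτle
      rwa [hxeq, max_eq_right hD2P.le] at this
    rcases lt_or_eq_of_le hyPa with hylt | hyeq
    · -- y τ < P a : x has negative derivative at τ, contradiction with increase to a
      have hd : x τ * (y τ - P (x τ)) < 0 := by
        rw [hxeq]
        exact mul_neg_of_pos_of_neg ha (by linarith)
      have hev := eventually_left_of_deriv_neg (hxd τ hτpos.le) hd
      obtain ⟨t, ht1, ht2⟩ := (hev.and (by filter_upwards [hmemIoo] with t ht using ht)).exists
      have h3 := (hpre t ht2.1.le ht2.2).1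
      rw [hxeq] at ht1
      linarith
    · -- y τ = P a : corner, use barrier function g
      have hdxτ : x τ * (y τ - P (x τ)) = 0 := by rw [hxeq, ← hyeq]; ring
      have h1 : Q k (x τ) < y τ := by
        rw [hyeq, ← hxeq]
        exact Q_lt_P hk hke hxτpos hxτ1
      have hdg : -(y τ)^2 * (y τ - Q k (x τ)) - Pd (x τ) * (x τ * (y τ - P (x τ))) < 0 := by
        rw [hdxτ, mul_zero, sub_zero]
        have := mul_pos (pow_pos hyτpos 2) (sub_pos.2 h1)
        linarith
      have hev := eventually_left_of_deriv_neg (hgd τ hτpos.le) hdg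
      -- eventually y t - P (x t) > y τ - P (x τ) = 0
      have hg0 : y τ - P (x τ) = 0 := by rw [hxeq, ← hyeq]; ring
      -- eventually Y t > D2
      have hevD : ∀ᶠ t in 𝓝[<] τ, D2 < Y t := by
        have htd : Tendsto Y (𝓝[<] τ) (𝓝 (Y τ)) := hYc.continuousAt.continuousWithinAt
        apply htd.eventually_const_lt
        rw [hYτ, hyeq]
        exact hD2P
      obtain ⟨t, ⟨ht1, ht2⟩, ht3⟩ :=
        ((hev.and hevD).and (by filter_upwards [hmemIoo] with t ht using ht)).exists
      have h3 := (hpre t ht3.1.le ht3.2).2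
      rw [hg0] at ht1
      rw [hY] at ht2
      simp only [max_eq_left ht3.1.le] at ht2
      rcases lt_max_iff.mp h3 with h | h
      · linarith
      · linarith
  · -- y τ = max D2 (P (x τ))
    have hyeq : y τ = max D2 (P (x τ)) := le_antisymm hyτle hc2
    rcases lt_trichotomy (P (x τ)) D2 with hPlt | hPeq | hPgt
    · -- y τ = D2, with P (x τ) < D2 near τ
      have hyD2 : y τ = D2 := by rw [hyeq, max_eq_left hPlt.le]
      have hd : -(y τ)^2 * (y τ - Q k (x τ)) < 0 := by
        have hq : Q k (x τ) < P (x τ) := Q_lt_P hk hke hxτpos hxτ1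
        rw [hyD2]
        have h1 : Q k (x τ) < D2 := lt_trans hq hPlt
        have := mul_pos (pow_pos hD2pos 2) (sub_pos.2 h1)
        linarith
      have hev := eventually_left_of_deriv_neg (hyd τ hτpos.le) hd
      have hevP : ∀ᶠ t in 𝓝[<] τ, P (X t) < D2 := by
        have htd : Tendsto (fun t => P (X t)) (𝓝[<] τ) (𝓝 (P (X τ))) :=
          (contP.comp hXc).continuousAt.continuousWithinAt
        apply htd.eventually_lt_const
        rwa [hXτ]
      obtain ⟨t, ⟨ht1, ht2⟩, ht3⟩ :=
        ((hev.and hevP).and (by filter_upwards [hmemIoo] with t ht using ht)).exists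
      have h3 := (hpre t ht3.1.le ht3.2).2
      rw [hX] at ht2
      simp only [max_eq_left ht3.1.le] at ht2
      rw [max_eq_left ht2.le] at h3
      rw [hyD2] at ht1
      linarith
    · -- corner: y τ = D2 = P (x τ)
      have hyD2 : y τ = D2 := by rw [hyeq, hPeq, max_self]
      have hq : Q k (x τ) < P (x τ) := Q_lt_P hk hke hxτpos hxτ1
      have hdh : -(y τ)^2 * (y τ - Q k (x τ)) < 0 := by
        rw [hyD2, ← hPeq]
        have := mul_pos (pow_pos (P_pos hxτpos hxτ1) 2) (sub_pos.2 hq)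
        linarith
      have hdxτ : x τ * (y τ - P (x τ)) = 0 := by rw [hyD2, ← hPeq]; ring
      have hdg : -(y τ)^2 * (y τ - Q k (x τ)) - Pd (x τ) * (x τ * (y τ - P (x τ))) < 0 := by
        rw [hdxτ, mul_zero, sub_zero]
        exact hdh
      have hevh := eventually_left_of_deriv_neg (hyd τ hτpos.le) hdh
      have hevg := eventually_left_of_deriv_neg (hgd τ hτpos.le) hdg
      have hg0 : y τ - P (x τ) = 0 := by rw [hyD2, ← hPeq]; ring
      obtain ⟨t, ⟨ht1, ht2⟩, ht3⟩ :=
        ((hevh.and hevg).and (by filter_upwards [hmemIoo] with t ht using ht)).exists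
      have h3 := (hpre t ht3.1.le ht3.2).2
      rw [hg0] at ht2
      rw [hyD2] at ht1
      rcases lt_max_iff.mp h3 with h | h
      · linarith
      · linarith
    · -- y τ = P (x τ) > D2 : pure barrier
      have hyP : y τ = P (x τ) := by rw [hyeq, max_eq_right hPgt.le]
      have hq : Q k (x τ) < P (x τ) := Q_lt_P hk hke hxτpos hxτ1
      have hdxτ : x τ * (y τ - P (x τ)) = 0 := by rw [hyP]; ring
      have hPpos : 0 < P (x τ) := P_pos hxτpos hxτ1
      have hdg : -(y τ)^2 * (y τ - Q k (x τ)) - Pd (x τ) * (x τ * (y τ - P (x τ))) < 0 := by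
        rw [hdxτ, mul_zero, sub_zero, hyP]
        have := mul_pos (pow_pos hPpos 2) (sub_pos.2 hq)
        linarith
      have hevg := eventually_left_of_deriv_neg (hgd τ hτpos.le) hdg
      have hg0 : y τ - P (x τ) = 0 := by rw [hyP]; ring
      have hevP : ∀ᶠ t in 𝓝[<] τ, D2 < P (X t) := by
        have htd : Tendsto (fun t => P (X t)) (𝓝[<] τ) (𝓝 (P (X τ))) :=
          (contP.comp hXc).continuousAt.continuousWithinAt
        apply htd.eventually_const_lt
        rwa [hXτ]
      obtain ⟨t, ⟨ht1, ht2⟩, ht3⟩ :=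
        ((hevg.and hevP).and (by filter_upwards [hmemIoo] with t ht using ht)).exists
      have h3 := (hpre t ht3.1.le ht3.2).2
      rw [hg0] at ht1
      rw [hX] at ht2
      simp only [max_eq_left ht3.1.le] at ht2
      rw [max_eq_right ht2.le] at h3
      linarith

end cases
end TruncHelp3
namespace TruncHelp3
section cases
variable {k : ℕ} {x y : ℝ → ℝ} {a : ℝ}

set_option maxHeartbeats 1000000 in
/-- Case x 0 > 0, y 0 > 0. -/
lemma caseD (hk : 2 ≤ k) (hke : Even k)
    (hxd : ∀ t, 0 ≤ t → HasDerivAt x (x t * (y t - P (x t))) t)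
    (hyd : ∀ t, 0 ≤ t → HasDerivAt y (-(y t)^2 * (y t - Q k (x t))) t)
    (ha : 0 < a) (ha1 : a ≤ 1) (hx0 : 0 < x 0) (hx0a : x 0 < a)
    (hy0 : 0 < y 0) (hy0b : y 0 < 3/8 * a^2) :
    Concl x y a := by
  have hxc : ∀ t, 0 ≤ t → ContinuousAt x t := fun t ht => (hxd t ht).continuousAt
  have hyc : ∀ t, 0 ≤ t → ContinuousAt y t := fun t ht => (hyd t ht).continuousAt
  have hgc : ∀ t, 0 ≤ t → ContinuousAt (fun t => y t - P (x t)) t := fun t ht =>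
    (hyc t ht).sub ((contP.tendsto _).comp (hxc t ht))
  have hxpos : ∀ t, 0 ≤ t → 0 < x t := by
    intro t ht
    obtain ⟨c, hcpos, hc⟩ := expSign hxd hgc t ht
    rw [hc]; exact mul_pos hx0 hcpos
  have hygc : ∀ t, 0 ≤ t → ContinuousAt (fun t => -(y t) * (y t - Q k (x t))) t := fun t ht =>
    ((hyc t ht).neg).mul ((hyc t ht).sub (((contQ k).tendsto _).comp (hxc t ht)))
  have hyd' : ∀ t, 0 ≤ t → HasDerivAt y (y t * (-(y t) * (y t - Q k (x t)))) t := by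
    intro t ht
    have := hyd t ht
    convert this using 1; ring
  have hypos : ∀ t, 0 ≤ t → 0 < y t := by
    intro t ht
    obtain ⟨c, hcpos, hc⟩ := expSign hyd' hygc t ht
    rw [hc]; exact mul_pos hy0 hcpos
  have hInv := caseD_inv hk hke hxd hyd ha ha1 hx0 hx0a hy0 hy0b hxpos hypos
  have hxa : ∀ t, 0 ≤ t → x t < a := fun t ht => (hInv t ht).1
  have hx1 : ∀ t, 0 ≤ t → x t ≤ 1 := fun t ht => le_trans (hxa t ht).le ha1
  have hybd : ∀ t, 0 ≤ t → y t < a^2 := by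
    intro t ht
    have h1 := (hInv t ht).2
    have h2 : P (x t) ≤ (x t)^2 := P_le_sq (hxpos t ht).le
    have h3 : (x t)^2 < a^2 := by nlinarith [hxpos t ht, hxa t ht]
    rcases max_cases (3/8 * a^2) (P (x t)) with ⟨he, -⟩ | ⟨he, -⟩ <;> rw [he] at h1 <;> nlinarith
  have hbounds : ∀ t, 0 ≤ t → |x t| < a ∧ |y t| < a^2 := by
    intro t ht
    rw [abs_of_pos (hxpos t ht), abs_of_pos (hypos t ht)]
    exact ⟨hxa t ht, hybd t ht⟩
  -- the barrier function derivative
  have hgd : ∀ t, 0 ≤ t → HasDerivAt (fun t => y t - P (x t))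
      (-(y t)^2 * (y t - Q k (x t)) - Pd (x t) * (x t * (y t - P (x t)))) t := by
    intro t ht
    exact (hyd t ht).sub ((hasDerivAt_P (x t)).comp t (hxd t ht))
  by_cases hB : ∃ t, 0 ≤ t ∧ y t ≤ P (x t)
  · -- there is a time after which y ≤ P(x): then x decreases to 0
    obtain ⟨t₁, ht₁0, ht₁le⟩ := hB
    have hbar : ∀ t, t₁ ≤ t → y t - P (x t) ≤ 0 := by
      apply barrier (dg := fun t => -(y t)^2 * (y t - Q k (x t)) - Pd (x t) * (x t * (y t - P (x t))))
        (fun t ht => hgd t (le_trans ht₁0 ht)) (by linarith)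
      intro t ht hg0
      have ht0 : (0:ℝ) ≤ t := le_trans ht₁0 ht
      have hq : Q k (x t) < P (x t) := Q_lt_P hk hke (hxpos t ht0) (hx1 t ht0)
      rw [hg0, mul_zero, mul_zero, sub_zero]
      have hyt : y t = P (x t) := by linarith [sub_eq_zero.mp hg0]
      have := mul_pos (pow_pos (hypos t ht0) 2) (sub_pos.2 (by linarith : Q k (x t) < y t))
      linarith
    have hxmono : AntitoneOn x (Ici t₁) := by
      apply antitoneOn_of_hasDerivAt_nonpos (d := fun t => x t * (y t - P (x t)))
        (fun t ht => hxd t (le_trans ht₁0 ht))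
      intro t ht
      exact mul_nonpos_of_nonneg_of_nonpos (hxpos t (le_trans ht₁0 ht.le)).le
        (hbar t ht.le)
    obtain ⟨Lx, hLx0, hxtd, hxge⟩ := tendsto_of_antitoneOn hxmono (b := 0)
      (fun t ht => (hxpos t (le_trans ht₁0 ht)).le)
    have hLxzero : Lx = 0 := by
      by_contra hne
      have hLxpos : 0 < Lx := lt_of_le_of_ne hLx0 (Ne.symm hne)
      have hLx1 : Lx ≤ 1 := le_trans (hxge t₁ le_rfl) (hx1 t₁ ht₁0)
      -- minimum of P - Q on [Lx, 1]
      have contR : Continuous (fun u => P u - Q k u) := contP.sub (contQ k)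
      obtain ⟨u0, hu0mem, hu0min⟩ := isCompact_Icc.exists_isMinOn
        (nonempty_Icc.2 hLx1) contR.continuousOn
      set ρ := P u0 - Q k u0 with hρ
      have hρpos : 0 < ρ :=
        sub_pos.2 (Q_lt_P hk hke (lt_of_lt_of_le hLxpos hu0mem.1) hu0mem.2)
      have hxmem : ∀ t, t₁ ≤ t → x t ∈ Icc Lx 1 := fun t ht =>
        ⟨hxge t ht, hx1 t (le_trans ht₁0 ht)⟩
      have hrge : ∀ t, t₁ ≤ t → ρ ≤ P (x t) - Q k (x t) := fun t ht =>
        isMinOn_iff.mp hu0min (x t) (hxmem t ht)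
      -- the Lyapunov-type quantity M = log x - 1/y
      set M : ℝ → ℝ := fun t => Real.log (x t) - (y t)⁻¹ with hM
      have hMd : ∀ t, t₁ ≤ t → HasDerivAt M (Q k (x t) - P (x t)) t := by
        intro t ht
        have ht0 : (0:ℝ) ≤ t := le_trans ht₁0 ht
        have hxne : x t ≠ 0 := (hxpos t ht0).ne'
        have hyne : y t ≠ 0 := (hypos t ht0).ne'
        have hlog := (hxd t ht0).log hxne
        have hinv := (hyd t ht0).inv hyne
        have := hlog.sub hinv
        exact this.congr_deriv (by
          rw [mul_div_cancel_left₀ _ hxne, neg_mul, neg_neg,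
            mul_div_cancel_left₀ _ (pow_ne_zero 2 hyne)]; ring)
      have hNd : ∀ t, t₁ ≤ t → HasDerivAt (fun t => M t + ρ * t)
          ((Q k (x t) - P (x t)) + ρ) t := by
        intro t ht
        have hid : HasDerivAt (fun s : ℝ => ρ * s) ρ t := by
          simpa using (hasDerivAt_id t).const_mul ρ
        exact (hMd t ht).add hid
      have hNanti : AntitoneOn (fun t => M t + ρ * t) (Ici t₁) := by
        apply antitoneOn_of_hasDerivAt_nonpos hNd
        intro t ht
        have := hrge t ht.le
        linarith
      set c₀ : ℝ := Real.log Lx - M t₁ - ρ * t₁ with hc₀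
      have hinvge : ∀ t, t₁ ≤ t → c₀ + ρ * t ≤ (y t)⁻¹ := by
        intro t ht
        have h1 : M t + ρ * t ≤ M t₁ + ρ * t₁ :=
          hNanti (self_mem_Ici) (mem_Ici.2 ht) ht
        have h2 : Real.log Lx ≤ Real.log (x t) :=
          Real.log_le_log hLxpos (hxge t ht)
        have h3 : (y t)⁻¹ = Real.log (x t) - M t := by rw [hM]; ring
        rw [h3, hc₀]
        linarith
      -- y → 0
      have htop : Tendsto (fun t : ℝ => c₀ + ρ * t) atTop atTop :=
        tendsto_atTop_add_const_left _ c₀ (tendsto_id.const_mul_atTop hρpos)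
      have hup0 : Tendsto (fun t : ℝ => (c₀ + ρ * t)⁻¹) atTop (𝓝 0) :=
        htop.inv_tendsto_atTop
      have hytd0 : Tendsto y atTop (𝓝 0) := by
        apply tendsto_of_tendsto_of_tendsto_of_le_of_le' tendsto_const_nhds hup0
        · filter_upwards [eventually_ge_atTop (0:ℝ)] with t ht using (hypos t ht).le
        · filter_upwards [eventually_ge_atTop (max t₁ ((1 - c₀)/ρ))] with t ht
          have ht1 : t₁ ≤ t := le_trans (le_max_left _ _) ht
          have ht2 : (1 - c₀)/ρ ≤ t := le_trans (le_max_right _ _) ht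
          have h4 : 1 - c₀ ≤ ρ * t := by
            have := (div_le_iff₀ hρpos).mp ht2
            linarith
          have h5 : (0:ℝ) < c₀ + ρ * t := by linarith
          have h6 := hinvge t ht1
          have h7 := inv_anti₀ h5 h6
          rwa [inv_inv] at h7
      -- eventually y < 3/8 Lx², so x decreases linearly: contradiction
      have hy38 : ∀ᶠ t in atTop, y t < 3/8 * Lx^2 :=
        hytd0.eventually_lt_const (by positivity)
      obtain ⟨T₀, hT₀⟩ := (hy38.and (eventually_ge_atTop t₁)).exists_forall_of_atTop
      have hT₀t₁ : t₁ ≤ T₀ := (hT₀ T₀ le_rfl).2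
      have hT₀0 : (0:ℝ) ≤ T₀ := le_trans ht₁0 hT₀t₁
      set β : ℝ := 3/8 * Lx^3 with hβ
      have hβpos : 0 < β := by rw [hβ]; positivity
      have hanti2 : AntitoneOn (fun t => x t + β * t) (Ici T₀) := by
        apply antitoneOn_of_hasDerivAt_nonpos
          (d := fun t => x t * (y t - P (x t)) + β)
        · intro t ht
          have hid : HasDerivAt (fun s : ℝ => β * s) β t := by
            simpa using (hasDerivAt_id t).const_mul β
          exact (hxd t (le_trans hT₀0 ht)).add hid
        · intro t ht
          have ht0 : (0:ℝ) ≤ t := le_trans hT₀0 ht.le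
          have hxgeLx : Lx ≤ x t := hxge t (le_trans hT₀t₁ ht.le)
          have hyt : y t < 3/8 * Lx^2 := (hT₀ t ht.le).1
          have hP34 : 3/4 * (x t)^2 ≤ P (x t) := P_ge (hxpos t ht0) (hx1 t ht0)
          have hsq : Lx^2 ≤ (x t)^2 := pow_le_pow_left₀ hLxpos.le hxgeLx 2
          have hc : y t - P (x t) ≤ -(3/8 * Lx^2) := by
            have h34 : 3/4 * Lx^2 ≤ 3/4 * (x t)^2 := by linarith
            linarith
          have h8 : x t * (y t - P (x t)) ≤ x t * (-(3/8 * Lx^2)) :=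
            mul_le_mul_of_nonneg_left hc (hxpos t ht0).le
          have h9 : x t * (-(3/8 * Lx^2)) ≤ Lx * (-(3/8 * Lx^2)) :=
            mul_le_mul_of_nonpos_right hxgeLx (neg_nonpos.2 (by positivity))
          have h10 : Lx * (-(3/8 * Lx^2)) = -β := by rw [hβ]; ring
          linarith
      exfalso
      set t₂ : ℝ := T₀ + (x T₀)/β + 1 with ht₂
      have hT₂ : T₀ ≤ t₂ := by
        rw [ht₂]
        have : 0 < (x T₀)/β := div_pos (hxpos T₀ hT₀0) hβpos
        linarith
      have h11 : x t₂ + β * t₂ ≤ x T₀ + β * T₀ :=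
        hanti2 (self_mem_Ici) (mem_Ici.2 hT₂) hT₂
      have h12 : β * ((x T₀)/β) = x T₀ := by field_simp
      have h13 : x t₂ ≤ -β := by
        rw [ht₂] at h11
        nlinarith [h12]
      have := hxpos t₂ (le_trans hT₀0 hT₂)
      linarith
    rw [hLxzero] at hxtd
    -- y → 0 by squeeze
    have hsq0 : Tendsto (fun t => x t * x t) atTop (𝓝 0) := by
      have := hxtd.mul hxtd
      simpa using this
    have hytd : Tendsto y atTop (𝓝 0) := by
      apply tendsto_of_tendsto_of_tendsto_of_le_of_le' tendsto_const_nhds hsq0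
      · filter_upwards [eventually_ge_atTop (0:ℝ)] with t ht using (hypos t ht).le
      · filter_upwards [eventually_ge_atTop (max t₁ 0)] with t ht
        have ht1 : t₁ ≤ t := le_trans (le_max_left _ _) ht
        have ht0 : (0:ℝ) ≤ t := le_trans (le_max_right _ _) ht
        have h1 := hbar t ht1
        have h2 : P (x t) ≤ (x t)^2 := P_le_sq (hxpos t ht0).le
        nlinarith
    exact ⟨hbounds, hxtd, hytd⟩
  · -- otherwise y > P(x) forever: impossible
    exfalso
    push_neg at hB
    have hyP : ∀ t, 0 ≤ t → P (x t) < y t := fun t ht => hB t ht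
    have hymono : AntitoneOn y (Ici 0) := by
      apply antitoneOn_of_hasDerivAt_nonpos (d := fun t => -(y t)^2 * (y t - Q k (x t))) hyd
      intro t ht
      have hq : Q k (x t) < P (x t) := Q_lt_P hk hke (hxpos t ht.le) (hx1 t ht.le)
      have h1 : 0 < y t - Q k (x t) := by linarith [hyP t ht.le]
      nlinarith [sq_nonneg (y t)]
    have hxmono : MonotoneOn x (Ici 0) := by
      apply monotoneOn_of_hasDerivAt_nonneg (d := fun t => x t * (y t - P (x t))) hxd
      intro t ht
      exact mul_nonneg (hxpos t ht.le).le (by linarith [hyP t ht.le])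
    obtain ⟨Ly, hLyb, hytd, hyle⟩ := tendsto_of_antitoneOn hymono (b := 0)
      (fun t ht => (hypos t ht).le)
    obtain ⟨Lx, hLxb, hxtd, hxle⟩ := tendsto_of_monotoneOn hxmono (b := a)
      (fun t ht => (hxa t ht).le)
    have hLxpos : 0 < Lx := lt_of_lt_of_le hx0 (hxle 0 le_rfl)
    have hLx1 : Lx ≤ 1 := le_trans hLxb ha1
    have hdxtd : Tendsto (fun t => x t * (y t - P (x t))) atTop (𝓝 (Lx * (Ly - P Lx))) :=
      hxtd.mul (hytd.sub ((contP.tendsto _).comp hxtd))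
    have hdytd : Tendsto (fun t => -(y t)^2 * (y t - Q k (x t))) atTop
        (𝓝 (-Ly^2 * (Ly - Q k Lx))) :=
      ((hytd.pow 2).neg).mul (hytd.sub (((contQ k).tendsto _).comp hxtd))
    have hzx := deriv_limit_zero hxd hxtd hdxtd
    have hzy := deriv_limit_zero hyd hytd hdytd
    have hLy : Ly = P Lx := by
      rcases mul_eq_zero.mp hzx with h | h
      · exact absurd h hLxpos.ne'
      · linarith [sub_eq_zero.mp h]
    have hPpos : 0 < P Lx := P_pos hLxpos hLx1
    have hq : Q k Lx < P Lx := Q_lt_P hk hke hLxpos hLx1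
    have h1 : 0 < Ly - Q k Lx := by rw [hLy]; linarith
    have h2 : 0 < Ly^2 := by rw [hLy]; positivity
    nlinarith [hzy]

end cases
end TruncHelp3
namespace TruncHelp

lemma P_neg (u : ℝ) : P (-u) = P u := by simp [P]

lemma Q_neg (k : ℕ) (u : ℝ) : Q k (-u) = Q k u := by
  unfold Q S
  rw [Finset.mul_sum, Finset.mul_sum]
  refine Finset.sum_congr rfl fun j _ => ?_
  have : (-u)^(2*j+1) = -(u^(2*j+1)) := Odd.neg_pow ⟨j, by ring⟩ u
  rw [this]
  ring

end TruncHelp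

/-- `(x, y)` is a solution on `[0, ∞)` of the truncated appendix system
`ẋ = x (y - x sin x)`, `ẏ = -y² (y - x T(x))`, where `T` is the degree `2k-1` Taylor
polynomial of `sin` at `0`. -/
def IsTruncatedSolution (k : ℕ) (x y : ℝ → ℝ) : Prop :=
  ∀ t : ℝ, 0 ≤ t →
    HasDerivAt x (x t * (y t - x t * Real.sin (x t))) t ∧
    HasDerivAt y (-(y t) ^ 2 *
      (y t - x t * ∑ j ∈ Finset.range k,
        (-1 : ℝ) ^ j * x t ^ (2 * j + 1) / (Nat.factorial (2 * j + 1)))) t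

namespace TruncHelp3

lemma main {k : ℕ} {x y : ℝ → ℝ} {a : ℝ} (hk : 2 ≤ k) (hke : Even k)
    (hsol : IsTruncatedSolution k x y) (ha : 0 < a) (ha1 : a ≤ 1)
    (hx0 : |x 0| < a) (hy0 : |y 0| < 3/8 * a^2) :
    (∀ t, 0 ≤ t → |x t| < a ∧ |y t| < a^2) ∧
      Tendsto (fun t => (x t, y t)) atTop (𝓝 ((0:ℝ), (0:ℝ))) := by
  have hxd : ∀ t, 0 ≤ t → HasDerivAt x (x t * (y t - P (x t))) t :=
    fun t ht => (hsol t ht).1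
  have hyd : ∀ t, 0 ≤ t → HasDerivAt y (-(y t)^2 * (y t - Q k (x t))) t :=
    fun t ht => (hsol t ht).2
  have habs := abs_lt.mp hx0
  have habsy := abs_lt.mp hy0
  have hconcl : Concl x y a ∨
      (Concl (fun t => -x t) y a ∧ True) := by
    rcases lt_trichotomy (x 0) 0 with hneg | hzero | hpos
    · right
      refine ⟨?_, trivial⟩
      have hx'd : ∀ t, 0 ≤ t →
          HasDerivAt (fun t => -x t) ((-x t) * (y t - P (-x t))) t := by
        intro t ht
        have := (hxd t ht).neg
        exact this.congr_deriv (by rw [P_neg]; ring)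
      have hy'd : ∀ t, 0 ≤ t →
          HasDerivAt y (-(y t)^2 * (y t - Q k (-x t))) t := by
        intro t ht
        have := hyd t ht
        simpa [Q_neg] using this
      rcases lt_trichotomy (y 0) 0 with hyneg | hyzero | hypos
      · exact caseC hk hke hx'd hy'd ha ha1 (by simpa using hneg) (by linarith [habs.1] : -x 0 < a)
          hyneg hy0
      · exact caseB hk hke hx'd hy'd ha ha1 (by simpa using hneg) (by linarith [habs.1] : -x 0 < a)
          hyzero
      · exact caseD hk hke hx'd hy'd ha ha1 (by simpa using hneg) (by linarith [habs.1] : -x 0 < a)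
          hypos habsy.2
    · left
      exact caseA hk hke hxd hyd ha ha1 hzero hy0
    · left
      rcases lt_trichotomy (y 0) 0 with hyneg | hyzero | hypos
      · exact caseC hk hke hxd hyd ha ha1 hpos habs.2 hyneg hy0
      · exact caseB hk hke hxd hyd ha ha1 hpos habs.2 hyzero
      · exact caseD hk hke hxd hyd ha ha1 hpos habs.2 hypos habsy.2
  rcases hconcl with ⟨hb, hxt, hyt⟩ | ⟨⟨hb, hxt, hyt⟩, -⟩
  · exact ⟨hb, hxt.prodMk_nhds hyt⟩
  · constructor
    · intro t ht
      have := hb t ht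
      simpa [abs_neg] using this
    · have hxt' : Tendsto x atTop (𝓝 0) := by
        have := hxt.neg
        simpa using this
      exact hxt'.prodMk_nhds hyt

end TruncHelp3

open TruncHelp3

/-- Failure of Taylor truncation in the appendix example: for even `k ≥ 2`, the origin is
asymptotically stable (Lyapunov stable and locally attracting) for the truncated system. -/
theorem taylor_truncation_asymptotic_stability (k : ℕ) (hk : 2 ≤ k) (hke : Even k) :
    (∀ ε > 0, ∃ δ > 0, ∀ x y : ℝ → ℝ, IsTruncatedSolution k x y →
      ‖(x 0, y 0)‖ < δ → ∀ t : ℝ, 0 ≤ t → ‖(x t, y t)‖ < ε) ∧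
    (∃ δ > 0, ∀ x y : ℝ → ℝ, IsTruncatedSolution k x y → ‖(x 0, y 0)‖ < δ →
      Filter.Tendsto (fun t : ℝ => (x t, y t)) Filter.atTop (nhds ((0 : ℝ), (0 : ℝ)))) := by

  constructor
  · intro ε hε
    set a : ℝ := min 1 ε with haa
    have ha : 0 < a := lt_min one_pos hε
    have ha1 : a ≤ 1 := min_le_left _ _
    have haε : a ≤ ε := min_le_right _ _
    refine ⟨3/8 * a^2, by positivity, ?_⟩
    intro x y hsol hnorm t ht
    have hx0 : |x 0| < 3/8 * a^2 :=
      lt_of_le_of_lt (by simpa using norm_fst_le ((x 0, y 0) : ℝ × ℝ)) hnorm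
    have hy0 : |y 0| < 3/8 * a^2 :=
      lt_of_le_of_lt (by simpa using norm_snd_le ((x 0, y 0) : ℝ × ℝ)) hnorm
    have hx0a : |x 0| < a := lt_of_lt_of_le hx0 (by nlinarith)
    obtain ⟨hb, -⟩ := main hk hke hsol ha ha1 hx0a hy0
    obtain ⟨h1, h2⟩ := hb t ht
    have hnt : ‖(x t, y t)‖ = max |x t| |y t| := by
      rw [Prod.norm_def]
      simp [Real.norm_eq_abs]
    rw [hnt]
    apply max_lt (lt_of_lt_of_le h1 haε)
    have : a^2 ≤ a := by nlinarith
    linarith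
  · refine ⟨3/8, by norm_num, ?_⟩
    intro x y hsol hnorm
    have hx0 : |x 0| < 3/8 :=
      lt_of_le_of_lt (by simpa using norm_fst_le ((x 0, y 0) : ℝ × ℝ)) hnorm
    have hy0 : |y 0| < 3/8 :=
      lt_of_le_of_lt (by simpa using norm_snd_le ((x 0, y 0) : ℝ × ℝ)) hnorm
    obtain ⟨-, htend⟩ := main hk hke hsol one_pos le_rfl
      (by linarith) (by rw [one_pow]; linarith)
    exact htend
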